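/- Let μ be a compactly supported Borel probability measure on ℝ^d and σ > 0. Define p : ℝ^d → ℝ by p(y) = ∫ exp(−‖y − x‖²/(2σ²)) dμ(x). Then p(y) > 0 for all y, p is differentiable, and for every y ∈ ℝ^d, σ²·∇p(y) = ∫ (x − y)·exp(−‖y − x‖²/(2σ²)) dμ(x); equivalently, the expected denoised sample satisfies y + σ²·∇(log p)(y) = (1/p(y))·∫ x·exp(−‖y − x‖²/(2σ²)) dμ(x). -/

import Mathlib

open MeasureTheory Metric

namespace TwAux

variable {d : ℕ}

local notation "E" => EuclideanSpace ℝ (Fin d)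

noncomputable def g (σ : ℝ) (y x : E) : ℝ := Real.exp (-‖y - x‖ ^ 2 / (2 * σ ^ 2))

noncomputable def v (σ : ℝ) (y x : E) : E := ((σ ^ 2)⁻¹ * g σ y x) • (x - y)

lemma texp_le (σ t : ℝ) (hσ : 0 < σ) (ht : 0 ≤ t) :
    t * Real.exp (-t ^ 2 / (2 * σ ^ 2)) ≤ 2 * σ := by
  set u : ℝ := t ^ 2 / (2 * σ ^ 2) with hu
  have hu0 : 0 ≤ u := by positivity
  have he0 : 0 < Real.exp (-u) := Real.exp_pos _
  have he1 : Real.exp (-u) ≤ 1 := Real.exp_le_one_iff.2 (by linarith)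
  have hkey : Real.exp (-u) * (1 + u) ≤ 1 := by
    have h2 : (1 : ℝ) + u ≤ Real.exp u := by linarith [Real.add_one_le_exp u]
    calc Real.exp (-u) * (1 + u) ≤ Real.exp (-u) * Real.exp u :=
          mul_le_mul_of_nonneg_left h2 he0.le
      _ = 1 := by rw [← Real.exp_add]; simp
  have hkey2 : Real.exp (-u) * t ^ 2 ≤ 2 * σ ^ 2 := by
    have hσ2 : (0:ℝ) < 2 * σ ^ 2 := by positivity
    have : Real.exp (-u) * u ≤ 1 := by nlinarith
    calc Real.exp (-u) * t ^ 2 = (Real.exp (-u) * u) * (2 * σ ^ 2) := by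
          rw [hu]; field_simp
      _ ≤ 1 * (2 * σ ^ 2) := by nlinarith
      _ = 2 * σ ^ 2 := one_mul _
  have h : -t ^ 2 / (2 * σ ^ 2) = -u := by rw [hu]; ring
  rw [h]
  nlinarith [mul_nonneg ht he0.le, sq_nonneg (t * Real.exp (-u) - 2 * σ)]

lemma g_pos (σ : ℝ) (y x : E) : 0 < g σ y x := Real.exp_pos _

lemma g_le_one (σ : ℝ) (y x : E) : g σ y x ≤ 1 :=
  Real.exp_le_one_iff.2
    (div_nonpos_of_nonpos_of_nonneg (neg_nonpos.2 (by positivity)) (by positivity))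

lemma g_cont (σ : ℝ) (y : E) : Continuous (fun x : E => g σ y x) := by
  unfold g; fun_prop

lemma v_cont (σ : ℝ) (y : E) : Continuous (fun x : E => v σ y x) := by
  unfold v g; fun_prop

lemma norm_v_le (σ : ℝ) (hσ : 0 < σ) (y x : E) : ‖v σ y x‖ ≤ 2 / σ := by
  rw [v, norm_smul]
  have h1 : ‖x - y‖ = ‖y - x‖ := norm_sub_rev _ _
  have h2 : |(σ ^ 2)⁻¹ * g σ y x| = (σ ^ 2)⁻¹ * g σ y x := by
    have := (g_pos σ y x).le
    have : (0:ℝ) ≤ (σ ^ 2)⁻¹ * g σ y x := by positivity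
    exact abs_of_nonneg this
  rw [Real.norm_eq_abs, h2, h1]
  have h3 : ‖y - x‖ * g σ y x ≤ 2 * σ := texp_le σ ‖y - x‖ hσ (norm_nonneg _)
  have hσ2 : (0:ℝ) < σ ^ 2 := by positivity
  calc (σ ^ 2)⁻¹ * g σ y x * ‖y - x‖ = (σ ^ 2)⁻¹ * (‖y - x‖ * g σ y x) := by ring
    _ ≤ (σ ^ 2)⁻¹ * (2 * σ) := by
        exact mul_le_mul_of_nonneg_left h3 (by positivity)
    _ = 2 / σ := by field_simp

lemma hasFDerivAt_g (σ : ℝ) (hσ : 0 < σ) (x y : E) :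
    HasFDerivAt (fun y' : E => g σ y' x)
      ((InnerProductSpace.toDual ℝ E) (v σ y x)) y := by
  have h1 : HasFDerivAt (fun y' : E => ‖y' - x‖ ^ 2) (2 • innerSL ℝ (y - x)) y := by
    simpa using ((hasFDerivAt_id y).sub_const x).norm_sq
  have h2 : HasFDerivAt (fun y' : E => -‖y' - x‖ ^ 2 / (2 * σ ^ 2))
      ((-(2 * σ ^ 2)⁻¹) • (2 • innerSL ℝ (y - x))) y := by
    have h := h1.const_mul (-(2 * σ ^ 2)⁻¹)
    have heq : (fun y' : E => -‖y' - x‖ ^ 2 / (2 * σ ^ 2))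
        = fun y' : E => -(2 * σ ^ 2)⁻¹ * ‖y' - x‖ ^ 2 := by
      funext y'; ring
    rw [heq]
    exact h
  have h3 := h2.exp
  refine HasFDerivAt.congr_fderiv h3 ?_
  ext w
  simp only [InnerProductSpace.toDual_apply_apply, v, g, ContinuousLinearMap.coe_smul',
    Pi.smul_apply, ContinuousLinearMap.coe_smul, smul_eq_mul,
    innerSL_apply_apply, real_inner_smul_left, inner_sub_left]
  ring

end TwAux

open MeasureTheory Metric

namespace TwAux
variable {d : ℕ}
local notation "E" => EuclideanSpace ℝ (Fin d)

lemma g_int (μ : Measure E) [IsProbabilityMeasure μ] (σ : ℝ) (y : E) :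
    Integrable (fun x => g σ y x) μ :=
  (integrable_const (1:ℝ)).mono' ((g_cont σ y).aestronglyMeasurable)
    (Filter.Eventually.of_forall fun x => by
      rw [Real.norm_eq_abs, abs_of_pos (g_pos _ _ _)]; exact g_le_one _ _ _)

lemma v_int (μ : Measure E) [IsProbabilityMeasure μ] (σ : ℝ) (hσ : 0 < σ) (y : E) :
    Integrable (fun x => v σ y x) μ :=
  (integrable_const (2/σ)).mono' ((v_cont σ y).aestronglyMeasurable)
    (Filter.Eventually.of_forall fun x => norm_v_le σ hσ y x)

lemma key (μ : Measure E) [IsProbabilityMeasure μ] (σ : ℝ) (hσ : 0 < σ) (y : E) :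
    HasGradientAt (fun y' : E => ∫ x, g σ y' x ∂μ) (∫ x, v σ y x ∂μ) y := by
  rw [hasGradientAt_iff_hasFDerivAt]
  have main := hasFDerivAt_integral_of_dominated_of_fderiv_le
    (μ := μ)
    (F := fun (y' : E) x => g σ y' x)
    (F' := fun (y' : E) x => (InnerProductSpace.toDual ℝ E) (v σ y' x))
    (x₀ := y) (bound := fun _ => 2/σ) (s := Metric.ball y 1) (Metric.ball_mem_nhds y one_pos)
    (Filter.Eventually.of_forall fun y' => (g_cont σ y').aestronglyMeasurable)
    (g_int μ σ y)
    (((InnerProductSpace.toDual ℝ E).continuous.comp (v_cont σ y)).aestronglyMeasurable)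
    (Filter.Eventually.of_forall fun x y' _ => by
      rw [(InnerProductSpace.toDual ℝ E).norm_map]
      exact norm_v_le σ hσ y' x)
    (integrable_const _)
    (Filter.Eventually.of_forall fun x y' _ => hasFDerivAt_g σ hσ x y')
  have heq : (∫ x, (InnerProductSpace.toDual ℝ E) (v σ y x) ∂μ)
      = (InnerProductSpace.toDual ℝ E) (∫ x, v σ y x ∂μ) :=
    ((InnerProductSpace.toDual ℝ E).toLinearIsometry.toContinuousLinearMap).integral_comp_comm
      (v_int μ σ hσ y)
  rwa [heq] at main

end TwAux

/-- Tweedie's formula / Empirical Bayes mean. For a compactly supported data distribution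
`μ` and `σ > 0`, the (unnormalized) Gaussian-smoothed density
`p(y) = ∫ exp(-‖y - x‖²/(2σ²)) dμ(x)` is positive and differentiable, with
`σ² ∇p(y) = ∫ (x - y) exp(-‖y - x‖²/(2σ²)) dμ(x)`; equivalently
`y + σ² ∇(log p)(y) = (1/p(y)) ∫ x exp(-‖y - x‖²/(2σ²)) dμ(x)`. -/
theorem stmt13 {d : ℕ} (μ : Measure (EuclideanSpace ℝ (Fin d))) [IsProbabilityMeasure μ]
    (hμ : ∃ K : Set (EuclideanSpace ℝ (Fin d)), IsCompact K ∧ μ Kᶜ = 0)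
    (σ : ℝ) (hσ : 0 < σ) :
    let p : EuclideanSpace ℝ (Fin d) → ℝ :=
      fun y => ∫ x, Real.exp (-‖y - x‖ ^ 2 / (2 * σ ^ 2)) ∂μ
    (∀ y, 0 < p y) ∧ Differentiable ℝ p ∧
      (∀ y, σ ^ 2 • gradient p y
          = ∫ x, Real.exp (-‖y - x‖ ^ 2 / (2 * σ ^ 2)) • (x - y) ∂μ) ∧
      (∀ y, y + σ ^ 2 • gradient (fun y' => Real.log (p y')) y
          = (p y)⁻¹ • ∫ x, Real.exp (-‖y - x‖ ^ 2 / (2 * σ ^ 2)) • x ∂μ) := by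
  intro p
  have hσ2 : (σ : ℝ) ^ 2 ≠ 0 := by positivity
  have hgrad : ∀ y, HasGradientAt p (∫ x, TwAux.v σ y x ∂μ) y :=
    fun y => TwAux.key μ σ hσ y
  have hpos : ∀ y, 0 < p y := fun y => integral_exp_pos (TwAux.g_int μ σ y)
  have hsv : ∀ y x : EuclideanSpace ℝ (Fin d), σ ^ 2 • TwAux.v σ y x = TwAux.g σ y x • (x - y) := fun y x => by
    rw [TwAux.v, smul_smul, ← mul_assoc, mul_inv_cancel₀ hσ2, one_mul]
  have hgx_int : ∀ y, Integrable (fun x => TwAux.g σ y x • x) μ := fun y => by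
    refine (integrable_const (2 * σ + ‖y‖)).mono'
      (((TwAux.g_cont σ y).smul continuous_id).aestronglyMeasurable)
      (Filter.Eventually.of_forall fun x => ?_)
    rw [norm_smul, Real.norm_eq_abs, abs_of_pos (TwAux.g_pos _ _ _)]
    have h1 : ‖x‖ ≤ ‖x - y‖ + ‖y‖ := by
      calc ‖x‖ = ‖(x - y) + y‖ := by rw [sub_add_cancel]
        _ ≤ ‖x - y‖ + ‖y‖ := norm_add_le _ _
    have h2 : TwAux.g σ y x * ‖x - y‖ ≤ 2 * σ := by
      rw [norm_sub_rev, mul_comm]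
      exact TwAux.texp_le σ ‖y - x‖ hσ (norm_nonneg _)
    have h3 : TwAux.g σ y x * ‖y‖ ≤ ‖y‖ :=
      mul_le_of_le_one_left (norm_nonneg _) (TwAux.g_le_one _ _ _)
    nlinarith [(TwAux.g_pos σ y x).le, norm_nonneg x]
  refine ⟨hpos, fun y => (hgrad y).differentiableAt, fun y => ?_, fun y => ?_⟩
  · rw [(hgrad y).gradient, ← integral_smul]
    simp_rw [hsv]
    rfl
  · have hp := hpos y
    have hlog : HasGradientAt (fun y' => Real.log (p y'))
        ((p y)⁻¹ • (∫ x, TwAux.v σ y x ∂μ)) y := by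
      rw [hasGradientAt_iff_hasFDerivAt]
      have h := ((hgrad y).hasFDerivAt).log (ne_of_gt hp)
      rw [_root_.map_smul]
      exact h
    rw [hlog.gradient]
    have h3 : σ ^ 2 • (∫ x, TwAux.v σ y x ∂μ)
        = (∫ x, TwAux.g σ y x • x ∂μ) - p y • y := by
      rw [← integral_smul]
      simp_rw [hsv, smul_sub]
      rw [integral_sub (hgx_int y) ((TwAux.g_int μ σ y).smul_const y), integral_smul_const]
      rfl
    rw [smul_comm, h3, smul_sub, smul_smul, inv_mul_cancel₀ hp.ne', one_smul]
    show y + ((p y)⁻¹ • (∫ x, TwAux.g σ y x • x ∂μ) - y) = _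
    abel
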